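/- Consider the scalar ODE x'(t) = (1/8)·(2π²)^{2/3}·x(t)^{5/3}·(−3x(t)² + 5x(t) − 2) on (0, ∞). The constant functions x ≡ 2/3 and x ≡ 1 are solutions, and for every initial value x(0) = ε with ε > 2/3 the maximal solution is defined on all of [0, ∞), remains in the interval between ε and 1 (inclusive), and satisfies x(t) → 1 as t → ∞. -/

import Mathlib

open Real Filter Set Topology
open scoped ENNReal

/-- The right-hand side of the scalar ODE obtained by restricting the normalized
spinor-flow system (case `aμ = 1`) to the curve of volume-one Berger metrics. -/
noncomputable def f1 (x : ℝ) : ℝ :=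
  (1/8) * (2 * π^2) ^ ((2:ℝ)/3) * x ^ ((5:ℝ)/3) * (-3*x^2 + 5*x - 2)

lemma coef_pos : 0 < (1/8 : ℝ) * (2 * π^2) ^ ((2:ℝ)/3) := by
  have := Real.pi_pos
  positivity

lemma f1_one : f1 1 = 0 := by
  unfold f1; norm_num

lemma f1_twothirds : f1 (2/3) = 0 := by
  unfold f1; norm_num

lemma f1_pos {x : ℝ} (h1 : 2/3 < x) (h2 : x < 1) : 0 < f1 x := by
  unfold f1
  have hx : (0:ℝ) < x := by linarith
  have h5 : (0:ℝ) < x ^ ((5:ℝ)/3) := Real.rpow_pos_of_pos hx _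
  have hp : 0 < -3*x^2 + 5*x - 2 := by nlinarith
  have := coef_pos
  positivity

lemma f1_neg {x : ℝ} (h : 1 < x) : f1 x < 0 := by
  unfold f1
  have hx : (0:ℝ) < x := by linarith
  have h5 : (0:ℝ) < x ^ ((5:ℝ)/3) := Real.rpow_pos_of_pos hx _
  have hp : -3*x^2 + 5*x - 2 < 0 := by nlinarith
  have hc := coef_pos
  have : 0 < (1/8 : ℝ) * (2 * π^2) ^ ((2:ℝ)/3) * x ^ ((5:ℝ)/3) := by positivity
  nlinarith

lemma f1_contDiffAt {x : ℝ} (hx : 0 < x) : ContDiffAt ℝ 1 f1 x := by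
  have h1 : ContDiffAt ℝ 1 (fun y : ℝ => y ^ ((5:ℝ)/3)) x :=
    Real.contDiffAt_rpow_const_of_ne hx.ne'
  have h2 : ContDiffAt ℝ 1 (fun y : ℝ => -3*y^2 + 5*y - 2) x := by fun_prop
  exact (contDiffAt_const.mul h1).mul h2

lemma f1_continuousAt {x : ℝ} (hx : 0 < x) : ContinuousAt f1 x :=
  (f1_contDiffAt hx).continuousAt

lemma f1_lipschitzOn {m M : ℝ} (hm : 0 < m) : ∃ K : NNReal, LipschitzOnWith K f1 (Icc m M) := by
  have hcd : ContDiffOn ℝ 1 f1 (Ioi 0) := fun y hy => (f1_contDiffAt hy).contDiffWithinAt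
  have hder : ContinuousOn (deriv f1) (Ioi 0) :=
    hcd.continuousOn_deriv_of_isOpen isOpen_Ioi le_rfl
  have hsub : Icc m M ⊆ Ioi (0:ℝ) := fun y hy => lt_of_lt_of_le hm hy.1
  obtain ⟨C, hC⟩ := isCompact_Icc.exists_bound_of_continuousOn (hder.mono hsub)
  refine ⟨⟨max C 0, le_max_right _ _⟩, ?_⟩
  apply (convex_Icc m M).lipschitzOnWith_of_nnnorm_deriv_le
    (fun y hy => (f1_contDiffAt (hsub hy)).differentiableAt one_ne_zero)
  intro y hy
  apply NNReal.coe_le_coe.mp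
  exact le_trans (hC y hy) (le_max_left _ _)

lemma solution_const_backward {x : ℝ → ℝ} {c0 b : ℝ} (hc0 : 0 < c0) (hfc : f1 c0 = 0)
    (hb : 0 ≤ b) (hsol : ∀ t ∈ Icc 0 b, 0 < x t ∧ HasDerivAt x (f1 (x t)) t)
    (hxb : x b = c0) : ∀ t ∈ Icc 0 b, x t = c0 := by
  have hcont : ContinuousOn x (Icc 0 b) := fun t ht =>
    ((hsol t ht).2.continuousAt).continuousWithinAt
  obtain ⟨tm, htm, hmin⟩ := isCompact_Icc.exists_isMinOn ⟨0, left_mem_Icc.2 hb⟩ hcont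
  obtain ⟨tM, htM, hmax⟩ := isCompact_Icc.exists_isMaxOn ⟨0, left_mem_Icc.2 hb⟩ hcont
  set m := min c0 (x tm) with hm
  set M := max c0 (x tM) with hM
  have hm0 : 0 < m := lt_min hc0 (hsol tm htm).1
  obtain ⟨K, hK⟩ := f1_lipschitzOn (m := m) (M := M) hm0
  have hmem : ∀ t ∈ Icc 0 b, x t ∈ Icc m M := fun t ht =>
    ⟨le_trans (min_le_right _ _) (hmin ht), le_trans (hmax ht) (le_max_right _ _)⟩
  have heq := ODE_solution_unique_of_mem_Icc_left (v := fun _ y => f1 y)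
    (s := fun _ => Icc m M) (K := K) (fun _ _ => hK) hcont
    (fun t ht => ((hsol t (Ioc_subset_Icc_self ht)).2).hasDerivWithinAt)
    (fun t ht => hmem t (Ioc_subset_Icc_self ht)) continuousOn_const
    (fun t _ => by simpa [hfc] using (hasDerivWithinAt_const t (Iic t) c0))
    (fun t _ => ⟨min_le_left _ _, le_max_left _ _⟩) (by simpa using hxb)
  exact fun t ht => heq ht

lemma solution_const_forward {x : ℝ → ℝ} {c0 b : ℝ} (hc0 : 0 < c0) (hfc : f1 c0 = 0)
    (hb : 0 ≤ b) (hsol : ∀ t ∈ Icc 0 b, 0 < x t ∧ HasDerivAt x (f1 (x t)) t)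
    (hx0 : x 0 = c0) : ∀ t ∈ Icc 0 b, x t = c0 := by
  have hcont : ContinuousOn x (Icc 0 b) := fun t ht =>
    ((hsol t ht).2.continuousAt).continuousWithinAt
  obtain ⟨tm, htm, hmin⟩ := isCompact_Icc.exists_isMinOn ⟨0, left_mem_Icc.2 hb⟩ hcont
  obtain ⟨tM, htM, hmax⟩ := isCompact_Icc.exists_isMaxOn ⟨0, left_mem_Icc.2 hb⟩ hcont
  set m := min c0 (x tm) with hm
  set M := max c0 (x tM) with hM
  have hm0 : 0 < m := lt_min hc0 (hsol tm htm).1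
  obtain ⟨K, hK⟩ := f1_lipschitzOn (m := m) (M := M) hm0
  have hmem : ∀ t ∈ Icc 0 b, x t ∈ Icc m M := fun t ht =>
    ⟨le_trans (min_le_right _ _) (hmin ht), le_trans (hmax ht) (le_max_right _ _)⟩
  have heq := ODE_solution_unique_of_mem_Icc_right (v := fun _ y => f1 y)
    (s := fun _ => Icc m M) (K := K) (fun _ _ => hK) hcont
    (fun t ht => ((hsol t (Ico_subset_Icc_self ht)).2).hasDerivWithinAt)
    (fun t ht => hmem t (Ico_subset_Icc_self ht)) continuousOn_const
    (fun t _ => by simpa [hfc] using (hasDerivWithinAt_const t (Ici t) c0))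
    (fun t _ => ⟨min_le_left _ _, le_max_left _ _⟩) (by simpa using hx0)
  exact fun t ht => heq ht

lemma boundsA {x : ℝ → ℝ} {ε b : ℝ} (hε : 2/3 < ε) (hε1 : ε < 1) (hx0 : x 0 = ε) (hb : 0 ≤ b)
    (hsol : ∀ t ∈ Icc 0 b, 0 < x t ∧ HasDerivAt x (f1 (x t)) t) :
    (∀ t ∈ Icc 0 b, 2/3 < x t ∧ x t < 1) ∧ MonotoneOn x (Icc 0 b) := by
  have hcont : ContinuousOn x (Icc 0 b) := fun t ht =>
    ((hsol t ht).2.continuousAt).continuousWithinAt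
  have hsolsub : ∀ s ∈ Icc 0 b, ∀ t ∈ Icc 0 s, 0 < x t ∧ HasDerivAt x (f1 (x t)) t :=
    fun s hs t ht => hsol t (⟨ht.1, le_trans ht.2 hs.2⟩)
  have hne1 : ∀ s ∈ Icc 0 b, x s ≠ 1 := by
    intro s hs h1
    have := solution_const_backward one_pos f1_one hs.1 (hsolsub s hs) h1 0
      (left_mem_Icc.2 hs.1)
    rw [hx0] at this; linarith
  have hne23 : ∀ s ∈ Icc 0 b, x s ≠ 2/3 := by
    intro s hs h1
    have := solution_const_backward (by norm_num) f1_twothirds hs.1 (hsolsub s hs) h1 0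
      (left_mem_Icc.2 hs.1)
    rw [hx0] at this; linarith
  have key : ∀ t ∈ Icc 0 b, 2/3 < x t ∧ x t < 1 := by
    intro s hs
    have hcont' : ContinuousOn x (Icc 0 s) := hcont.mono (Icc_subset_Icc_right hs.2)
    constructor
    · by_contra h
      push_neg at h
      have h23 : (2:ℝ)/3 ∈ Icc (x s) (x 0) := ⟨h, by rw [hx0]; exact hε.le⟩
      obtain ⟨u, hu, hxu⟩ := intermediate_value_Icc' hs.1 hcont' h23
      exact hne23 u ⟨hu.1, le_trans hu.2 hs.2⟩ hxu
    · by_contra h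
      push_neg at h
      have h1 : (1:ℝ) ∈ Icc (x 0) (x s) := ⟨by rw [hx0]; exact hε1.le, h⟩
      obtain ⟨u, hu, hxu⟩ := intermediate_value_Icc hs.1 hcont' h1
      exact hne1 u ⟨hu.1, le_trans hu.2 hs.2⟩ hxu
  refine ⟨key, ?_⟩
  have := strictMonoOn_of_deriv_pos (convex_Icc 0 b) hcont (fun s hs => by
    rw [interior_Icc] at hs
    have hs' : s ∈ Icc 0 b := Ioo_subset_Icc_self hs
    rw [(hsol s hs').2.deriv]
    exact f1_pos (key s hs').1 (key s hs').2)
  exact this.monotoneOn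

lemma boundsB {x : ℝ → ℝ} {ε b : ℝ} (hε1 : 1 < ε) (hx0 : x 0 = ε) (hb : 0 ≤ b)
    (hsol : ∀ t ∈ Icc 0 b, 0 < x t ∧ HasDerivAt x (f1 (x t)) t) :
    (∀ t ∈ Icc 0 b, 1 < x t) ∧ AntitoneOn x (Icc 0 b) := by
  have hcont : ContinuousOn x (Icc 0 b) := fun t ht =>
    ((hsol t ht).2.continuousAt).continuousWithinAt
  have hsolsub : ∀ s ∈ Icc 0 b, ∀ t ∈ Icc 0 s, 0 < x t ∧ HasDerivAt x (f1 (x t)) t :=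
    fun s hs t ht => hsol t (⟨ht.1, le_trans ht.2 hs.2⟩)
  have hne1 : ∀ s ∈ Icc 0 b, x s ≠ 1 := by
    intro s hs h1
    have := solution_const_backward one_pos f1_one hs.1 (hsolsub s hs) h1 0
      (left_mem_Icc.2 hs.1)
    rw [hx0] at this; linarith
  have key : ∀ t ∈ Icc 0 b, 1 < x t := by
    intro s hs
    have hcont' : ContinuousOn x (Icc 0 s) := hcont.mono (Icc_subset_Icc_right hs.2)
    by_contra h
    push_neg at h
    have h1 : (1:ℝ) ∈ Icc (x s) (x 0) := ⟨h, by rw [hx0]; exact hε1.le⟩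
    obtain ⟨u, hu, hxu⟩ := intermediate_value_Icc' hs.1 hcont' h1
    exact hne1 u ⟨hu.1, le_trans hu.2 hs.2⟩ hxu
  refine ⟨key, ?_⟩
  have := strictAntiOn_of_deriv_neg (convex_Icc 0 b) hcont (fun s hs => by
    rw [interior_Icc] at hs
    have hs' : s ∈ Icc 0 b := Ioo_subset_Icc_self hs
    rw [(hsol s hs').2.deriv]
    exact f1_neg (key s hs'))
  exact this.antitoneOn

lemma limit_exists {x : ℝ → ℝ} {ε T₀ : ℝ} (hε : 2/3 < ε) (hx0 : x 0 = ε) (hT₀ : 0 < T₀)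
    (hsol : ∀ t, 0 ≤ t → t < T₀ → 0 < x t ∧ HasDerivAt x (f1 (x t)) t) :
    ∃ L, 0 < L ∧ Tendsto x (𝓝[<] T₀) (𝓝 L) := by
  set x' : ℝ → ℝ := fun t => x (max t 0) with hx'
  have hsol' : ∀ b, 0 ≤ b → b < T₀ → ∀ t ∈ Icc 0 b, 0 < x t ∧ HasDerivAt x (f1 (x t)) t :=
    fun b hb hbT t ht => hsol t ht.1 (lt_of_le_of_lt ht.2 hbT)
  have hcongr : x' =ᶠ[𝓝[<] T₀] x := by
    refine eventually_of_mem (Ioo_mem_nhdsLT_of_mem ⟨hT₀, le_rfl⟩) (fun s hs => ?_)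
    simp only [hx', max_eq_left hs.1.le]
  rcases lt_trichotomy ε 1 with h1 | h1 | h1
  · -- increasing case
    have Mf : MonotoneOn x' (Iio T₀) := by
      intro s hs t ht hst
      have hbT : max t 0 < T₀ := max_lt ht hT₀
      have hB := boundsA hε h1 hx0 (le_max_right t 0) (hsol' _ (le_max_right t 0) hbT)
      exact hB.2 ⟨le_max_right s 0, max_le_max hst le_rfl⟩
        ⟨le_max_right t 0, le_rfl⟩ (max_le_max hst le_rfl)
    have hbdd : BddAbove (x' '' Iio T₀) := by
      refine ⟨1, fun v hv => ?_⟩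
      obtain ⟨t, ht, rfl⟩ := hv
      have hbT : max t 0 < T₀ := max_lt ht hT₀
      have hB := boundsA hε h1 hx0 (le_max_right t 0) (hsol' _ (le_max_right t 0) hbT)
      exact ((hB.1 _ ⟨le_max_right t 0, le_rfl⟩).2).le
    refine ⟨sSup (x' '' Iio T₀), ?_, (Mf.tendsto_nhdsLT hbdd).congr' hcongr⟩
    have : ε ≤ sSup (x' '' Iio T₀) := by
      refine le_csSup hbdd ⟨0, hT₀, ?_⟩
      simp [hx', hx0]
    linarith
  · -- constant case
    refine ⟨1, one_pos, ?_⟩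
    refine tendsto_const_nhds.congr' ?_
    refine eventually_of_mem (Ioo_mem_nhdsLT_of_mem ⟨hT₀, le_rfl⟩) (fun s hs => ?_)
    exact (solution_const_forward one_pos f1_one hs.1.le (hsol' _ hs.1.le hs.2)
      (by rw [hx0, h1]) s ⟨hs.1.le, le_rfl⟩).symm
  · -- decreasing case
    have Mf : AntitoneOn x' (Iio T₀) := by
      intro s hs t ht hst
      have hbT : max t 0 < T₀ := max_lt ht hT₀
      have hB := boundsB h1 hx0 (le_max_right t 0) (hsol' _ (le_max_right t 0) hbT)
      exact hB.2 ⟨le_max_right s 0, max_le_max hst le_rfl⟩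
        ⟨le_max_right t 0, le_rfl⟩ (max_le_max hst le_rfl)
    have hbdd : BddBelow (x' '' Iio T₀) := by
      refine ⟨1, fun v hv => ?_⟩
      obtain ⟨t, ht, rfl⟩ := hv
      have hbT : max t 0 < T₀ := max_lt ht hT₀
      have hB := boundsB h1 hx0 (le_max_right t 0) (hsol' _ (le_max_right t 0) hbT)
      exact (hB.1 _ ⟨le_max_right t 0, le_rfl⟩).le
    refine ⟨sInf (x' '' Iio T₀), ?_, (Mf.tendsto_nhdsLT hbdd).congr' hcongr⟩
    have : (1:ℝ) ≤ sInf (x' '' Iio T₀) := by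
      refine le_csInf ⟨x' 0, 0, hT₀, rfl⟩ ?_
      rintro v ⟨t, ht, rfl⟩
      have hbT : max t 0 < T₀ := max_lt ht hT₀
      have hB := boundsB h1 hx0 (le_max_right t 0) (hsol' _ (le_max_right t 0) hbT)
      exact (hB.1 _ ⟨le_max_right t 0, le_rfl⟩).le
    linarith

/-- `x` is a solution of `x' = f1(x)` on `J`, with values in `(0, ∞)`. -/
def IsSolutionOn (x : ℝ → ℝ) (J : Set ℝ) : Prop :=
  ∀ t ∈ J, 0 < x t ∧ HasDerivAt x (f1 (x t)) t

/-- The interval `[0, T)` as a subset of `ℝ`, where `T ∈ (0,∞]`. -/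
def domainUpTo (T : ℝ≥0∞) : Set ℝ := {t : ℝ | 0 ≤ t ∧ ENNReal.ofReal t < T}

/-- `x` is a maximal solution on `[0, T)`: it is a solution there and cannot be
extended to a solution on a strictly larger interval to the right. -/
def IsMaxSolution (x : ℝ → ℝ) (T : ℝ≥0∞) : Prop :=
  0 < T ∧ IsSolutionOn x (domainUpTo T) ∧
    ¬ ∃ (T' : ℝ≥0∞) (x' : ℝ → ℝ), T < T' ∧ IsSolutionOn x' (domainUpTo T') ∧
        ∀ t ∈ domainUpTo T, x' t = x t

lemma max_solution_top {x : ℝ → ℝ} {ε : ℝ} {T : ℝ≥0∞} (hε : 2/3 < ε) (hx0 : x 0 = ε)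
    (hmax : IsMaxSolution x T) : T = ⊤ := by
  obtain ⟨hT0, hsolT, hnoext⟩ := hmax
  by_contra hTne
  set T₀ := T.toReal with hT₀def
  have hT₀pos : 0 < T₀ := ENNReal.toReal_pos hT0.ne' hTne
  have hsol : ∀ t, 0 ≤ t → t < T₀ → 0 < x t ∧ HasDerivAt x (f1 (x t)) t := fun t ht htT =>
    hsolT t ⟨ht, (ENNReal.ofReal_lt_iff_lt_toReal ht hTne).mpr htT⟩
  obtain ⟨L, hLpos, hLlim⟩ := limit_exists hε hx0 hT₀pos hsol
  obtain ⟨y, hy0, δ, hδ, hy⟩ :=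
    (f1_contDiffAt hLpos).exists_forall_mem_closedBall_exists_eq_forall_mem_Ioo_hasDerivAt₀ T₀
  have hycont : ContinuousAt y T₀ := (hy T₀ ⟨by linarith, by linarith⟩).continuousAt
  have hypos : ∀ᶠ s in 𝓝 T₀, 0 < y s := by
    have : Ioi (0:ℝ) ∈ 𝓝 (y T₀) := Ioi_mem_nhds (by rw [hy0]; exact hLpos)
    exact hycont this
  obtain ⟨δ', hδ'pos, hδ'⟩ := Metric.eventually_nhds_iff.mp hypos
  set δ₂ := min δ' δ / 2 with hδ₂def
  have hδ₂pos : 0 < δ₂ := by positivity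
  have hδ₂δ : δ₂ < δ := by
    have : min δ' δ ≤ δ := min_le_right _ _
    have : δ₂ ≤ δ / 2 := by rw [hδ₂def]; linarith
    linarith
  have hδ₂δ' : δ₂ < δ' := by
    have : min δ' δ ≤ δ' := min_le_left _ _
    have : δ₂ ≤ δ' / 2 := by rw [hδ₂def]; linarith
    linarith
  set T' := ENNReal.ofReal (T₀ + δ₂) with hT'def
  have hTT' : T < T' := by
    conv_lhs => rw [← ENNReal.ofReal_toReal hTne]
    exact (ENNReal.ofReal_lt_ofReal_iff (by linarith)).mpr (by linarith)
  set X : ℝ → ℝ := fun t => if t < T₀ then x t else y t with hXdef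
  have hXx : ∀ t, t < T₀ → X =ᶠ[𝓝 t] x :=
    fun t ht => eventually_of_mem (isOpen_Iio.mem_nhds ht) (fun s hs => if_pos hs)
  have hXy : ∀ t, T₀ < t → X =ᶠ[𝓝 t] y :=
    fun t ht => eventually_of_mem (isOpen_Ioi.mem_nhds ht)
      (fun s hs => if_neg (not_lt.2 (le_of_lt hs)))
  have hXT : X T₀ = L := by
    show (if T₀ < T₀ then x T₀ else y T₀) = L
    rw [if_neg (lt_irrefl T₀), hy0]
  refine hnoext ⟨T', X, hTT', ?_, ?_⟩
  · intro t ht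
    obtain ⟨ht0, htT'⟩ := ht
    have htlt : t < T₀ + δ₂ := by
      rw [hT'def] at htT'
      exact (ENNReal.ofReal_lt_ofReal_iff_of_nonneg ht0).mp htT'
    rcases lt_trichotomy t T₀ with h | h | h
    · have hs := hsol t ht0 h
      have hXt : X t = x t := if_pos h
      refine ⟨by rw [hXt]; exact hs.1, ?_⟩
      rw [hXt]
      exact hs.2.congr_of_eventuallyEq (hXx t h)
    · subst h
      refine ⟨by rw [hXT]; exact hLpos, ?_⟩
      have hr : HasDerivWithinAt X (f1 L) (Ici T₀) T₀ := by
        have h0 := (hy T₀ ⟨by linarith, by linarith⟩).hasDerivWithinAt (s := Ici T₀)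
        rw [hy0] at h0
        exact h0.congr (fun s hs => if_neg (not_lt.2 hs)) (if_neg (lt_irrefl T₀))
      have hl : HasDerivWithinAt X (f1 L) (Iic T₀) T₀ := by
        apply hasDerivWithinAt_Iic_of_tendsto_deriv (s := Ioo 0 T₀)
        · intro s hs
          exact ((hsol s hs.1.le hs.2).2.congr_of_eventuallyEq
            (hXx s hs.2)).differentiableAt.differentiableWithinAt
        · have h1 : Tendsto x (𝓝[Ioo 0 T₀] T₀) (𝓝 L) :=
            hLlim.mono_left (nhdsWithin_mono _ Ioo_subset_Iio_self)
          have h2 : Tendsto X (𝓝[Ioo 0 T₀] T₀) (𝓝 L) :=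
            h1.congr' (eventually_of_mem self_mem_nhdsWithin
              (fun s hs => (if_pos hs.2).symm))
          rw [ContinuousWithinAt, hXT]
          exact h2
        · exact Ioo_mem_nhdsLT_of_mem ⟨hT₀pos, le_rfl⟩
        · have h1 : Tendsto (fun s => f1 (x s)) (𝓝[<] T₀) (𝓝 (f1 L)) :=
            ((f1_continuousAt hLpos).tendsto).comp hLlim
          refine h1.congr' ?_
          refine eventually_of_mem (Ioo_mem_nhdsLT_of_mem ⟨hT₀pos, le_rfl⟩) (fun s hs => ?_)
          exact (((hsol s hs.1.le hs.2).2.congr_of_eventuallyEq (hXx s hs.2)).deriv).symm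
      have hu := hl.union hr
      rw [Iic_union_Ici] at hu
      rw [hXT]
      exact hasDerivWithinAt_univ.mp hu
    · have hmem : t ∈ Ioo (T₀ - δ) (T₀ + δ) := ⟨by linarith, by linarith⟩
      have hyp : 0 < y t := by
        apply hδ'
        rw [Real.dist_eq, abs_of_pos (by linarith : (0:ℝ) < t - T₀)]
        linarith
      have hXt : X t = y t := if_neg (not_lt.2 h.le)
      refine ⟨by rw [hXt]; exact hyp, ?_⟩
      rw [hXt]
      exact (hy t hmem).congr_of_eventuallyEq (hXy t h)
  · intro t ht
    obtain ⟨ht0, htT⟩ := ht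
    exact if_pos ((ENNReal.ofReal_lt_iff_lt_toReal ht0 hTne).mp htT)

lemma linear_lower {x : ℝ → ℝ} {d t : ℝ} (ht : 0 ≤ t)
    (hder : ∀ s ∈ Icc 0 t, HasDerivAt x (f1 (x s)) s)
    (hd : ∀ s ∈ Icc 0 t, d ≤ f1 (x s)) : x 0 + d * t ≤ x t := by
  set g : ℝ → ℝ := fun s => x s - d * s with hg
  have hgder : ∀ s ∈ Icc 0 t, HasDerivAt g (f1 (x s) - d) s := fun s hs => by
    have h := (hder s hs).sub ((hasDerivAt_id s).const_mul d); simp only [mul_one] at h; exact h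
  have hmono : MonotoneOn g (Icc 0 t) := by
    apply monotoneOn_of_deriv_nonneg (convex_Icc 0 t)
    · exact fun s hs => ((hgder s hs).continuousAt).continuousWithinAt
    · intro s hs; rw [interior_Icc] at hs
      exact ((hgder s (Ioo_subset_Icc_self hs)).differentiableAt).differentiableWithinAt
    · intro s hs; rw [interior_Icc] at hs
      rw [(hgder s (Ioo_subset_Icc_self hs)).deriv]
      have := hd s (Ioo_subset_Icc_self hs); linarith
  have h := hmono (left_mem_Icc.2 ht) (right_mem_Icc.2 ht) ht
  have h' : x 0 - d * 0 ≤ x t - d * t := h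
  linarith

lemma linear_upper {x : ℝ → ℝ} {d t : ℝ} (ht : 0 ≤ t)
    (hder : ∀ s ∈ Icc 0 t, HasDerivAt x (f1 (x s)) s)
    (hd : ∀ s ∈ Icc 0 t, f1 (x s) ≤ d) : x t ≤ x 0 + d * t := by
  set g : ℝ → ℝ := fun s => x s - d * s with hg
  have hgder : ∀ s ∈ Icc 0 t, HasDerivAt g (f1 (x s) - d) s := fun s hs => by
    have h := (hder s hs).sub ((hasDerivAt_id s).const_mul d); simp only [mul_one] at h; exact h
  have hmono : AntitoneOn g (Icc 0 t) := by
    apply antitoneOn_of_deriv_nonpos (convex_Icc 0 t)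
    · exact fun s hs => ((hgder s hs).continuousAt).continuousWithinAt
    · intro s hs; rw [interior_Icc] at hs
      exact ((hgder s (Ioo_subset_Icc_self hs)).differentiableAt).differentiableWithinAt
    · intro s hs; rw [interior_Icc] at hs
      rw [(hgder s (Ioo_subset_Icc_self hs)).deriv]
      have := hd s (Ioo_subset_Icc_self hs); linarith
  have h := hmono (left_mem_Icc.2 ht) (right_mem_Icc.2 ht) ht
  have h' : x t - d * t ≤ x 0 - d * 0 := h
  linarith

lemma tendstoA {x : ℝ → ℝ} {ε : ℝ} (hε : 2/3 < ε) (hε1 : ε < 1) (hx0 : x 0 = ε)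
    (hsol : ∀ t, 0 ≤ t → 0 < x t ∧ HasDerivAt x (f1 (x t)) t) :
    (∀ t, 0 ≤ t → ε ≤ x t ∧ x t < 1) ∧ Tendsto x atTop (𝓝 1) := by
  have hsolIcc : ∀ b, 0 ≤ b → ∀ t ∈ Icc 0 b, 0 < x t ∧ HasDerivAt x (f1 (x t)) t :=
    fun b _ t ht => hsol t ht.1
  have hB : ∀ b, 0 ≤ b → (∀ t ∈ Icc 0 b, 2/3 < x t ∧ x t < 1) ∧ MonotoneOn x (Icc 0 b) :=
    fun b hb => boundsA hε hε1 hx0 hb (hsolIcc b hb)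
  have hkey : ∀ t, 0 ≤ t → 2/3 < x t ∧ x t < 1 :=
    fun t ht => (hB t ht).1 t (right_mem_Icc.2 ht)
  have hεle : ∀ t, 0 ≤ t → ε ≤ x t := fun t ht => by
    have := (hB t ht).2 (left_mem_Icc.2 ht) (right_mem_Icc.2 ht) ht
    rwa [hx0] at this
  refine ⟨fun t ht => ⟨hεle t ht, (hkey t ht).2⟩, ?_⟩
  set x' : ℝ → ℝ := fun t => x (max t 0) with hx'
  have hmono : Monotone x' := by
    intro s t hst
    exact (hB (max t 0) (le_max_right t 0)).2 ⟨le_max_right s 0, max_le_max hst le_rfl⟩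
      ⟨le_max_right t 0, le_rfl⟩ (max_le_max hst le_rfl)
  have hbdd : BddAbove (range x') := by
    refine ⟨1, ?_⟩; rintro v ⟨t, rfl⟩
    exact (hkey _ (le_max_right t 0)).2.le
  have htend : Tendsto x' atTop (𝓝 (⨆ t, x' t)) := tendsto_atTop_ciSup hmono hbdd
  set L := ⨆ t, x' t with hL
  have hxeq : x' =ᶠ[atTop] x := by
    filter_upwards [eventually_ge_atTop (0:ℝ)] with t ht
    simp [hx', max_eq_left ht]
  have htendx : Tendsto x atTop (𝓝 L) := htend.congr' hxeq
  have hLle : L ≤ 1 := ciSup_le (fun t => (hkey _ (le_max_right t 0)).2.le)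
  have hεL : ε ≤ L := by
    have := le_ciSup hbdd (0:ℝ)
    simpa [hx', hx0] using this
  have hxleL : ∀ t, 0 ≤ t → x t ≤ L := fun t ht => by
    have := le_ciSup hbdd t
    rwa [show x' t = x t by simp [hx', max_eq_left ht]] at this
  have hL1 : L = 1 := by
    by_contra hne
    have hL1' : L < 1 := lt_of_le_of_ne hLle hne
    have hcont : ContinuousOn f1 (Icc ε L) := fun u hu =>
      (f1_continuousAt (by linarith [hu.1])).continuousWithinAt
    obtain ⟨u, hu, humin⟩ := isCompact_Icc.exists_isMinOn ⟨ε, left_mem_Icc.2 hεL⟩ hcont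
    have hd : 0 < f1 u := f1_pos (lt_of_lt_of_le hε hu.1) (lt_of_le_of_lt hu.2 hL1')
    have ht₁ : (0:ℝ) ≤ 1 / f1 u := by positivity
    have hgrow := linear_lower ht₁ (fun s hs => (hsol s hs.1).2)
      (fun s hs => humin ⟨hεle s hs.1, hxleL s hs.1⟩)
    rw [hx0] at hgrow
    have hcancel : f1 u * (1 / f1 u) = 1 := by field_simp
    rw [hcancel] at hgrow
    have := (hkey _ ht₁).2
    linarith
  rwa [hL1] at htendx

lemma tendstoB {x : ℝ → ℝ} {ε : ℝ} (hε1 : 1 < ε) (hx0 : x 0 = ε)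
    (hsol : ∀ t, 0 ≤ t → 0 < x t ∧ HasDerivAt x (f1 (x t)) t) :
    (∀ t, 0 ≤ t → 1 < x t ∧ x t ≤ ε) ∧ Tendsto x atTop (𝓝 1) := by
  have hsolIcc : ∀ b, 0 ≤ b → ∀ t ∈ Icc 0 b, 0 < x t ∧ HasDerivAt x (f1 (x t)) t :=
    fun b _ t ht => hsol t ht.1
  have hB : ∀ b, 0 ≤ b → (∀ t ∈ Icc 0 b, 1 < x t) ∧ AntitoneOn x (Icc 0 b) :=
    fun b hb => boundsB hε1 hx0 hb (hsolIcc b hb)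
  have hkey : ∀ t, 0 ≤ t → 1 < x t := fun t ht => (hB t ht).1 t (right_mem_Icc.2 ht)
  have hεge : ∀ t, 0 ≤ t → x t ≤ ε := fun t ht => by
    have := (hB t ht).2 (left_mem_Icc.2 ht) (right_mem_Icc.2 ht) ht
    rwa [hx0] at this
  refine ⟨fun t ht => ⟨hkey t ht, hεge t ht⟩, ?_⟩
  set x' : ℝ → ℝ := fun t => x (max t 0) with hx'
  have hmono : Antitone x' := by
    intro s t hst
    exact (hB (max t 0) (le_max_right t 0)).2 ⟨le_max_right s 0, max_le_max hst le_rfl⟩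
      ⟨le_max_right t 0, le_rfl⟩ (max_le_max hst le_rfl)
  have hbdd : BddBelow (range x') := by
    refine ⟨1, ?_⟩; rintro v ⟨t, rfl⟩
    exact (hkey _ (le_max_right t 0)).le
  have htend : Tendsto x' atTop (𝓝 (⨅ t, x' t)) := tendsto_atTop_ciInf hmono hbdd
  set L := ⨅ t, x' t with hL
  have hxeq : x' =ᶠ[atTop] x := by
    filter_upwards [eventually_ge_atTop (0:ℝ)] with t ht
    simp [hx', max_eq_left ht]
  have htendx : Tendsto x atTop (𝓝 L) := htend.congr' hxeq
  have hLge : 1 ≤ L := le_ciInf (fun t => (hkey _ (le_max_right t 0)).le)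
  have hεL : L ≤ ε := by
    have := ciInf_le hbdd (0:ℝ)
    simpa [hx', hx0] using this
  have hxgeL : ∀ t, 0 ≤ t → L ≤ x t := fun t ht => by
    have := ciInf_le hbdd t
    rwa [show x' t = x t by simp [hx', max_eq_left ht]] at this
  have hL1 : L = 1 := by
    by_contra hne
    have hL1' : 1 < L := lt_of_le_of_ne hLge (Ne.symm hne)
    have hcont : ContinuousOn f1 (Icc L ε) := fun u hu =>
      (f1_continuousAt (by linarith [hu.1])).continuousWithinAt
    obtain ⟨u, hu, humax⟩ := isCompact_Icc.exists_isMaxOn ⟨L, left_mem_Icc.2 hεL⟩ hcont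
    have hd : f1 u < 0 := f1_neg (lt_of_lt_of_le hL1' hu.1)
    have ht₁ : (0:ℝ) ≤ ε / (-(f1 u)) := by
      apply div_nonneg (by linarith) (by linarith)
    have hgrow := linear_upper ht₁ (fun s hs => (hsol s hs.1).2)
      (fun s hs => humax ⟨hxgeL s hs.1, hεge s hs.1⟩)
    rw [hx0] at hgrow
    have hcancel : f1 u * (ε / (-(f1 u))) = -ε := by
      have hne0 : f1 u ≠ 0 := ne_of_lt hd
      have h2 : f1 u * (ε / (-(f1 u))) = -(f1 u / f1 u * ε) := by ring
      rw [h2, div_self hne0, one_mul]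
    rw [hcancel] at hgrow
    have := hkey _ ht₁
    linarith
  rwa [hL1] at htendx

/-- For the scalar ODE `x' = (1/8)(2π²)^(2/3) x^(5/3)(-3x² + 5x - 2)` on `(0, ∞)`:
the constants `2/3` and `1` are solutions, and every maximal solution with initial
value `ε > 2/3` exists for all time, stays in the closed interval between `ε` and `1`,
and converges to `1`. -/
theorem scalar_ode_amu_one :
    IsSolutionOn (fun _ => (2:ℝ)/3) Set.univ ∧
    IsSolutionOn (fun _ => (1:ℝ)) Set.univ ∧
    ∀ ε : ℝ, 2/3 < ε → ∀ (x : ℝ → ℝ) (T : ℝ≥0∞), IsMaxSolution x T → x 0 = ε →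
      T = ⊤ ∧ (∀ t : ℝ, 0 ≤ t → x t ∈ Set.uIcc ε 1) ∧ Tendsto x atTop (𝓝 1) := by
  refine ⟨?_, ?_, ?_⟩
  · intro t _
    exact ⟨by norm_num, by simpa [f1_twothirds] using hasDerivAt_const t ((2:ℝ)/3)⟩
  · intro t _
    exact ⟨one_pos, by simpa [f1_one] using hasDerivAt_const t (1:ℝ)⟩
  · intro ε hε x T hmax hx0
    have hT := max_solution_top hε hx0 hmax
    obtain ⟨hT0, hsolT, -⟩ := hmax
    have hsol : ∀ t, 0 ≤ t → 0 < x t ∧ HasDerivAt x (f1 (x t)) t := fun t ht =>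
      hsolT t ⟨ht, by rw [hT]; exact ENNReal.ofReal_lt_top⟩
    have hmain : (∀ t : ℝ, 0 ≤ t → x t ∈ Set.uIcc ε 1) ∧ Tendsto x atTop (𝓝 1) := by
      rcases lt_trichotomy ε 1 with h1 | h1 | h1
      · obtain ⟨hmem, htend⟩ := tendstoA hε h1 hx0 hsol
        refine ⟨fun t ht => ?_, htend⟩
        rw [Set.uIcc_of_le h1.le]
        exact ⟨(hmem t ht).1, (hmem t ht).2.le⟩
      · subst h1
        have hconst : ∀ t, 0 ≤ t → x t = 1 := fun t ht =>
          solution_const_forward one_pos f1_one ht (fun s hs => hsol s hs.1) hx0 t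
            (right_mem_Icc.2 ht)
        refine ⟨fun t ht => by simp [hconst t ht], ?_⟩
        refine tendsto_const_nhds.congr' ?_
        filter_upwards [eventually_ge_atTop (0:ℝ)] with t ht
        exact (hconst t ht).symm
      · obtain ⟨hmem, htend⟩ := tendstoB h1 hx0 hsol
        refine ⟨fun t ht => ?_, htend⟩
        rw [Set.uIcc_of_ge h1.le]
        exact ⟨(hmem t ht).1.le, (hmem t ht).2⟩
    exact ⟨hT, hmain.1, hmain.2⟩
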